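/- Let ρ be a density matrix on ℂ^a ⊗ ℂ^b ⊗ ℂ^c (a positive semidefinite matrix of trace 1 indexed by triples from Fin a × Fin b × Fin c). Then ρ has stochastically localizable entanglement (SLE) on subsystems A and B — i.e., there exists a finite family of Kraus operators K^i = K_A^i ⊗ K_B^i ⊗ K_C^i (each K_A^i an a×a matrix, K_B^i a b×b matrix, K_C^i a c×c matrix) with Σ_i (K^i)†K^i ≤ I (in the Loewner order), such that T := Σ_i K^i ρ (K^i)† has tr(T) > 0 and the normalized partial trace over C, tr_C(T)/tr(T), is an entangled (not separable) state on ℂ^a ⊗ ℂ^b — if and only if there exists a unit vector ψ ∈ ℂ^c such that the a·b × a·b matrix σ with entries σ((i,j),(k,l)) = Σ_{m,n} conj(ψ(m)) · ρ((i,j,m),(k,l,n)) · ψ(n) has tr(σ) > 0 and σ/tr(σ) is entangled. -/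

import Mathlib

open Matrix BigOperators Kronecker ComplexOrder

noncomputable section

/-- A bipartite matrix on ℂ^a ⊗ ℂ^b is separable if it is a finite sum of Kronecker
products of rank-one matrices `xᵢxᵢ† ⊗ yᵢyᵢ†`. -/
def Separable {a b : ℕ} (σ : Matrix (Fin a × Fin b) (Fin a × Fin b) ℂ) : Prop :=
  ∃ (n : ℕ) (x : Fin n → Fin a → ℂ) (y : Fin n → Fin b → ℂ),
    σ = ∑ i, Matrix.of (fun p q : Fin a × Fin b =>
      (x i p.1 * (starRingEnd ℂ) (x i q.1)) * (y i p.2 * (starRingEnd ℂ) (y i q.2)))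

/-- The partial trace over the third subsystem. -/
def ptraceC {a b c : ℕ}
    (T : Matrix (Fin a × Fin b × Fin c) (Fin a × Fin b × Fin c) ℂ) :
    Matrix (Fin a × Fin b) (Fin a × Fin b) ℂ :=
  Matrix.of fun p q => ∑ m : Fin c, T (p.1, p.2, m) (q.1, q.2, m)

lemma sep_zero {a b : ℕ} : Separable (0 : Matrix (Fin a × Fin b) (Fin a × Fin b) ℂ) :=
  ⟨0, fun i _ => 0, fun i _ => 0, by simp⟩

lemma sep_add {a b : ℕ} {σ τ : Matrix (Fin a × Fin b) (Fin a × Fin b) ℂ}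
    (hσ : Separable σ) (hτ : Separable τ) : Separable (σ + τ) := by
  obtain ⟨n, x, y, rfl⟩ := hσ
  obtain ⟨m, u, v, rfl⟩ := hτ
  refine ⟨n + m, Fin.append x u, Fin.append y v, ?_⟩
  rw [Fin.sum_univ_add]
  simp [Fin.append_left, Fin.append_right]

lemma sep_sum {a b : ℕ} {ι : Type*} (s : Finset ι)
    (f : ι → Matrix (Fin a × Fin b) (Fin a × Fin b) ℂ)
    (h : ∀ i ∈ s, Separable (f i)) : Separable (∑ i ∈ s, f i) :=
  Finset.sum_induction f Separable (fun _ _ => sep_add) sep_zero h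

lemma sep_smul_real {a b : ℕ} {σ : Matrix (Fin a × Fin b) (Fin a × Fin b) ℂ}
    (r : ℝ) (hr : 0 ≤ r) (hσ : Separable σ) : Separable ((r : ℂ) • σ) := by
  obtain ⟨n, x, y, rfl⟩ := hσ
  refine ⟨n, fun i j => (Real.sqrt r : ℂ) * x i j, y, ?_⟩
  rw [Finset.smul_sum]
  refine Finset.sum_congr rfl fun i _ => ?_
  ext p q
  have hs : (Real.sqrt r : ℂ) * (Real.sqrt r : ℂ) = (r : ℂ) := by
    rw [← Complex.ofReal_mul, Real.mul_self_sqrt hr]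
  simp only [Matrix.smul_apply, Matrix.of_apply, _root_.map_mul, Complex.conj_ofReal, smul_eq_mul]
  linear_combination - (x i p.1 * (starRingEnd ℂ) (x i q.1) * (y i p.2 * (starRingEnd ℂ) (y i q.2))) * hs

lemma sep_smul {a b : ℕ} {σ : Matrix (Fin a × Fin b) (Fin a × Fin b) ℂ}
    {z : ℂ} (hz : 0 ≤ z) (hσ : Separable σ) : Separable (z • σ) := by
  have hre : z = ((z.re : ℝ) : ℂ) := by
    have := (Complex.le_def.mp hz).2
    apply Complex.ext <;> simp [this.symm]
  rw [hre]
  exact sep_smul_real z.re (by have := (Complex.le_def.mp hz).1; simpa using this) hσ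

lemma rankOne_eq {d e : ℕ} (x : Fin d → ℂ) (y : Fin e → ℂ) :
    Matrix.of (fun p q : Fin d × Fin e =>
      (x p.1 * (starRingEnd ℂ) (x q.1)) * (y p.2 * (starRingEnd ℂ) (y q.2)))
    = (vecMulVec x (star x)) ⊗ₖ (vecMulVec y (star y)) := by
  ext p q
  simp [vecMulVec_apply, kroneckerMap_apply, Pi.star_apply, mul_comm, mul_left_comm]

lemma conj_rankOne {d : ℕ} (A : Matrix (Fin d) (Fin d) ℂ) (x : Fin d → ℂ) :
    A * vecMulVec x (star x) * Aᴴ = vecMulVec (A *ᵥ x) (star (A *ᵥ x)) := by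
  ext i j
  simp only [Matrix.mul_apply, vecMulVec_apply, conjTranspose_apply, Pi.star_apply,
    mulVec, dotProduct, Finset.sum_mul, Finset.mul_sum, star_apply, star_sum, star_mul']
  refine Finset.sum_congr rfl fun k _ => Finset.sum_congr rfl fun l _ => ?_
  simp [mul_comm, mul_left_comm, mul_assoc]

lemma kron_conjTranspose {d e : Type*} [Fintype d] [Fintype e] (A : Matrix d d ℂ) (B : Matrix e e ℂ) :
    (A ⊗ₖ B)ᴴ = Aᴴ ⊗ₖ Bᴴ := by
  ext p q
  simp [kroneckerMap_apply, conjTranspose_apply]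

lemma sep_conj {a b : ℕ} {σ : Matrix (Fin a × Fin b) (Fin a × Fin b) ℂ}
    (A : Matrix (Fin a) (Fin a) ℂ) (B : Matrix (Fin b) (Fin b) ℂ)
    (hσ : Separable σ) : Separable ((A ⊗ₖ B) * σ * (A ⊗ₖ B)ᴴ) := by
  obtain ⟨n, x, y, rfl⟩ := hσ
  refine ⟨n, fun i => A *ᵥ x i, fun i => B *ᵥ y i, ?_⟩
  rw [Finset.mul_sum, Finset.sum_mul]
  refine Finset.sum_congr rfl fun i _ => ?_
  rw [rankOne_eq, rankOne_eq, kron_conjTranspose, ← mul_kronecker_mul, ← mul_kronecker_mul,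
    conj_rankOne, conj_rankOne]

def proj {a b c : ℕ} (ρ : Matrix (Fin a × Fin b × Fin c) (Fin a × Fin b × Fin c) ℂ)
    (ψ : Fin c → ℂ) : Matrix (Fin a × Fin b) (Fin a × Fin b) ℂ :=
  Matrix.of (fun p q : Fin a × Fin b =>
    ∑ m, ∑ n, (starRingEnd ℂ) (ψ m) * ρ (p.1, p.2, m) (q.1, q.2, n) * ψ n)

def Wmat {a b c : ℕ} (ψ : Fin c → ℂ) : Matrix (Fin a × Fin b × Fin c) (Fin a × Fin b) ℂ :=
  Matrix.of fun r p =>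
    (if r.1 = p.1 then 1 else 0) * (if r.2.1 = p.2 then 1 else 0) * ψ r.2.2

lemma W_eq {a b c : ℕ} (ρ : Matrix (Fin a × Fin b × Fin c) (Fin a × Fin b × Fin c) ℂ)
    (ψ : Fin c → ℂ) : (Wmat (a := a) (b := b) ψ)ᴴ * ρ * Wmat (a := a) (b := b) ψ = proj ρ ψ := by
  ext p q
  simp only [Matrix.mul_apply, conjTranspose_apply, Wmat, proj, Matrix.of_apply,
    apply_ite (star : ℂ → ℂ), star_zero, star_mul', star_one,
    Fintype.sum_prod_type,
    ite_mul, one_mul, zero_mul, mul_ite, mul_zero, mul_one,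
    Finset.sum_ite_eq', Finset.sum_ite_eq, Finset.mem_univ, if_true,
    Finset.mul_sum, Finset.sum_mul]
  rw [Finset.sum_comm]
  simp only [Finset.sum_ite_irrel, Finset.sum_const_zero, Finset.sum_ite_eq,
    Finset.sum_ite_eq', Finset.mem_univ, if_true]
  rw [Finset.sum_comm]
  rfl

lemma proj_posSemidef {a b c : ℕ} {ρ : Matrix (Fin a × Fin b × Fin c) (Fin a × Fin b × Fin c) ℂ}
    (hρ : ρ.PosSemidef) (ψ : Fin c → ℂ) : (proj ρ ψ).PosSemidef :=
  W_eq ρ ψ ▸ hρ.conjTranspose_mul_mul_same _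

lemma ptraceC_eq_sum_proj {a b c : ℕ}
    (T : Matrix (Fin a × Fin b × Fin c) (Fin a × Fin b × Fin c) ℂ) :
    ptraceC T = ∑ m : Fin c, proj T (fun s => if s = m then 1 else 0) := by
  ext p q
  simp only [ptraceC, Matrix.of_apply, Matrix.sum_apply, proj,
    apply_ite (starRingEnd ℂ), _root_.map_one, _root_.map_zero, ite_mul, one_mul, zero_mul,
    mul_ite, mul_one, mul_zero, Finset.sum_ite_irrel, Finset.sum_const_zero,
    Finset.sum_ite_eq, Finset.sum_ite_eq', Finset.mem_univ, if_true]

lemma W_mul_kron {a b c : ℕ} (KA : Matrix (Fin a) (Fin a) ℂ) (KB : Matrix (Fin b) (Fin b) ℂ)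
    (KC : Matrix (Fin c) (Fin c) ℂ) (m : Fin c) :
    (Wmat (a := a) (b := b) (fun s => if s = m then 1 else 0))ᴴ * (KA ⊗ₖ (KB ⊗ₖ KC))
    = (KA ⊗ₖ KB) * (Wmat (a := a) (b := b) (fun s => (starRingEnd ℂ) (KC m s)))ᴴ := by
  ext p r
  simp only [Matrix.mul_apply, conjTranspose_apply, Wmat, Matrix.of_apply,
    kroneckerMap_apply, apply_ite (star : ℂ → ℂ), star_zero, star_one, star_mul',
    Fintype.sum_prod_type, ite_mul, one_mul, zero_mul, mul_ite, mul_zero, mul_one,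
    Finset.sum_ite_irrel, Finset.sum_const_zero, Finset.sum_ite_eq,
    Finset.sum_ite_eq', Finset.mem_univ, if_true]
  simp [RingHomInvPair.comp_apply_eq, Complex.conj_conj, mul_comm, mul_left_comm]

lemma sandwich {n m : Type*} [Fintype n] [Fintype m]
    (E : Matrix n m ℂ) (K ρ : Matrix n n ℂ) :
    Eᴴ * (K * ρ * Kᴴ) * E = (Eᴴ * K) * ρ * (Eᴴ * K)ᴴ := by
  rw [conjTranspose_mul, conjTranspose_conjTranspose]
  simp only [Matrix.mul_assoc]

lemma key_one {a b c : ℕ} (KA : Matrix (Fin a) (Fin a) ℂ) (KB : Matrix (Fin b) (Fin b) ℂ)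
    (KC : Matrix (Fin c) (Fin c) ℂ) (ρ : Matrix (Fin a × Fin b × Fin c) (Fin a × Fin b × Fin c) ℂ) :
    ptraceC ((KA ⊗ₖ (KB ⊗ₖ KC)) * ρ * (KA ⊗ₖ (KB ⊗ₖ KC))ᴴ)
    = ∑ m : Fin c, (KA ⊗ₖ KB) * proj ρ (fun s => (starRingEnd ℂ) (KC m s)) * (KA ⊗ₖ KB)ᴴ := by
  rw [ptraceC_eq_sum_proj]
  refine Finset.sum_congr rfl fun m _ => ?_
  rw [← W_eq, ← W_eq, sandwich, W_mul_kron, conjTranspose_mul,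
    conjTranspose_conjTranspose]
  simp only [Matrix.mul_assoc]

lemma ptraceC_sum {a b c : ℕ} {ι : Type*} (s : Finset ι)
    (T : ι → Matrix (Fin a × Fin b × Fin c) (Fin a × Fin b × Fin c) ℂ) :
    ptraceC (∑ i ∈ s, T i) = ∑ i ∈ s, ptraceC (T i) := by
  ext p q
  simp only [ptraceC, Matrix.of_apply, Matrix.sum_apply]
  rw [Finset.sum_comm]

lemma trace_ptraceC {a b c : ℕ}
    (T : Matrix (Fin a × Fin b × Fin c) (Fin a × Fin b × Fin c) ℂ) :
    (ptraceC T).trace = T.trace := by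
  simp [Matrix.trace, ptraceC, Matrix.diag, Fintype.sum_prod_type]

lemma proj_smul {a b c : ℕ} (ρ : Matrix (Fin a × Fin b × Fin c) (Fin a × Fin b × Fin c) ℂ)
    (z : ℂ) (ψ : Fin c → ℂ) :
    proj ρ (fun s => z * ψ s) = ((starRingEnd ℂ) z * z) • proj ρ ψ := by
  ext p q
  simp only [proj, Matrix.of_apply, Matrix.smul_apply, smul_eq_mul, Finset.mul_sum,
    _root_.map_mul]
  refine Finset.sum_congr rfl fun m _ => Finset.sum_congr rfl fun n _ => ?_
  ring

lemma proj_zero {a b c : ℕ} (ρ : Matrix (Fin a × Fin b × Fin c) (Fin a × Fin b × Fin c) ℂ) :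
    proj ρ (fun _ => 0) = 0 := by
  ext p q
  simp [proj]

lemma psd_diag_nonneg {n : Type*} [Fintype n] [DecidableEq n] {M : Matrix n n ℂ}
    (hM : M.PosSemidef) (i : n) : 0 ≤ M i i := by
  exact hM.diag_nonneg

lemma psd_trace_nonneg {n : Type*} [Fintype n] [DecidableEq n] {M : Matrix n n ℂ}
    (hM : M.PosSemidef) : 0 ≤ M.trace :=
  Finset.sum_nonneg fun i _ => psd_diag_nonneg hM i

lemma psd_trace_zero {n : Type*} [Fintype n] [DecidableEq n] {M : Matrix n n ℂ}
    (hM : M.PosSemidef) (h : M.trace = 0) : M = 0 := by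
  exact hM.trace_eq_zero_iff.mp h

lemma one_kron_psd {d e : Type*} [Fintype d] [Fintype e] [DecidableEq d] [DecidableEq e]
    {M : Matrix e e ℂ} (hM : M.PosSemidef) :
    ((1 : Matrix d d ℂ) ⊗ₖ M).PosSemidef := by
  refine Matrix.PosSemidef.of_dotProduct_mulVec_nonneg ?_ ?_
  · rw [Matrix.IsHermitian, kron_conjTranspose, conjTranspose_one, hM.1.eq]
  · intro v
    have hv : star v ⬝ᵥ ((1 : Matrix d d ℂ) ⊗ₖ M) *ᵥ v
        = ∑ i : d, star (fun j => v (i, j)) ⬝ᵥ M *ᵥ (fun j => v (i, j)) := by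
      simp only [dotProduct, Matrix.mulVec, kroneckerMap_apply, one_apply,
        Pi.star_apply, Fintype.sum_prod_type, ite_mul, zero_mul, one_mul,
        mul_ite, mul_zero, Finset.sum_ite_irrel, Finset.sum_const_zero,
        Finset.sum_ite_eq, Finset.sum_ite_eq', Finset.mem_univ, if_true,
        Finset.mul_sum, Finset.sum_mul]
    rw [hv]
    exact Finset.sum_nonneg fun i _ => hM.dotProduct_mulVec_nonneg _

lemma one_sub_kron {d e : Type*} [Fintype d] [Fintype e] [DecidableEq d] [DecidableEq e]
    (N : Matrix e e ℂ) :
    (1 : Matrix (d × e) (d × e) ℂ) - (1 : Matrix d d ℂ) ⊗ₖ N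
    = (1 : Matrix d d ℂ) ⊗ₖ ((1 : Matrix e e ℂ) - N) := by
  ext p q
  simp only [Matrix.sub_apply, Matrix.one_apply, kroneckerMap_apply, Prod.mk.injEq,
    Prod.ext_iff, ite_and]
  split_ifs <;> simp_all

lemma complex_inv_nonneg {z : ℂ} (hz : 0 < z) : 0 ≤ z⁻¹ := by
  have him : z.im = 0 := ((Complex.lt_def.mp hz).2).symm
  have h1 : z = ((z.re : ℝ) : ℂ) := Complex.ext rfl (by simp [him])
  rw [h1, ← Complex.ofReal_inv]
  exact Complex.zero_le_real.mpr (inv_nonneg.mpr (le_of_lt (Complex.lt_def.mp hz).1))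

lemma sep_proj_of_not_rhs {a b c : ℕ}
    {ρ : Matrix (Fin a × Fin b × Fin c) (Fin a × Fin b × Fin c) ℂ}
    (hρ : ρ.PosSemidef)
    (hR : ∀ ψ : Fin c → ℂ, (∑ m, Complex.normSq (ψ m)) = 1 →
      0 < (proj ρ ψ).trace → Separable (((proj ρ ψ).trace)⁻¹ • proj ρ ψ))
    (ψ : Fin c → ℂ) : Separable (proj ρ ψ) := by
  set r : ℝ := ∑ m, Complex.normSq (ψ m) with hr
  have hr0 : 0 ≤ r := Finset.sum_nonneg fun m _ => Complex.normSq_nonneg _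
  rcases eq_or_lt_of_le hr0 with h0 | hpos
  · have hψ0 : ψ = fun _ => 0 := by
      funext m
      exact Complex.normSq_eq_zero.mp ((Finset.sum_eq_zero_iff_of_nonneg
        (fun m _ => Complex.normSq_nonneg (ψ m))).mp h0.symm m (Finset.mem_univ m))
    rw [hψ0, proj_zero]; exact sep_zero
  · set s : ℝ := Real.sqrt r with hsdef
    have hs : 0 < s := Real.sqrt_pos.mpr hpos
    have hss : s * s = r := Real.mul_self_sqrt hr0
    set ψ' : Fin c → ℂ := fun m => ((s⁻¹ : ℝ) : ℂ) * ψ m with hψ'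
    have hunit : (∑ m, Complex.normSq (ψ' m)) = 1 := by
      simp only [hψ', Complex.normSq_mul, Complex.normSq_ofReal]
      rw [← Finset.mul_sum, ← hr, ← hss]
      field_simp
    have hdecomp : ψ = fun m => ((s : ℝ) : ℂ) * ψ' m := by
      funext m
      simp only [hψ']
      rw [← mul_assoc, ← Complex.ofReal_mul, mul_inv_cancel₀ (ne_of_gt hs)]
      simp
    have hpsi : proj ρ ψ = ((r : ℝ) : ℂ) • proj ρ ψ' := by
      rw [hdecomp, proj_smul, Complex.conj_ofReal, ← Complex.ofReal_mul, hss]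
    have hsep' : Separable (proj ρ ψ') := by
      have hpsd := proj_posSemidef hρ ψ'
      rcases eq_or_lt_of_le (psd_trace_nonneg hpsd) with ht | ht
      · rw [psd_trace_zero hpsd ht.symm]; exact sep_zero
      · have hS := hR ψ' hunit ht
        have heq : proj ρ ψ' = (proj ρ ψ').trace • (((proj ρ ψ').trace)⁻¹ • proj ρ ψ') := by
          rw [smul_smul, mul_inv_cancel₀ (ne_of_gt ht), one_smul]
        rw [heq]
        exact sep_smul (le_of_lt ht) hS
    rw [hpsi]
    exact sep_smul_real r hr0 hsep'

lemma sum_conj_mul_self {c : ℕ} {ψ : Fin c → ℂ} (hψ : (∑ m, Complex.normSq (ψ m)) = 1) :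
    (∑ u, (starRingEnd ℂ) (ψ u) * ψ u) = 1 := by
  have h : ∀ u : Fin c, (starRingEnd ℂ) (ψ u) * ψ u = ((Complex.normSq (ψ u) : ℝ) : ℂ) :=
    fun u => (Complex.normSq_eq_conj_mul_self (z := ψ u)).symm
  simp_rw [h]
  rw [← Complex.ofReal_sum, hψ, Complex.ofReal_one]

lemma one_sub_outer_psd {c : ℕ} {ψ : Fin c → ℂ} (hψ : (∑ m, Complex.normSq (ψ m)) = 1) :
    ((1 : Matrix (Fin c) (Fin c) ℂ) - vecMulVec ψ (star ψ)).PosSemidef := by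
  set P := vecMulVec ψ (star ψ) with hPdef
  have hPP : P * P = P := by
    ext s t
    simp only [hPdef, Matrix.mul_apply, vecMulVec_apply, Pi.star_apply]
    calc (∑ u, ψ s * star (ψ u) * (ψ u * star (ψ t)))
        = (ψ s * star (ψ t)) * ∑ u, (starRingEnd ℂ) (ψ u) * ψ u := by
          rw [Finset.mul_sum]; refine Finset.sum_congr rfl fun u _ => ?_
          show _ = _ * (star (ψ u) * ψ u); ring
      _ = ψ s * star (ψ t) := by rw [sum_conj_mul_self hψ, mul_one]
  have hPh : Pᴴ = P := by
    ext s t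
    simp [hPdef, conjTranspose_apply, vecMulVec_apply, mul_comm]
  have h2 : ((1 : Matrix (Fin c) (Fin c) ℂ) - P)ᴴ * (1 - P) = 1 - P := by
    rw [conjTranspose_sub, conjTranspose_one, hPh, Matrix.sub_mul, Matrix.mul_sub,
      Matrix.mul_sub, Matrix.one_mul, Matrix.mul_one, hPP]
    simp
  exact h2 ▸ Matrix.posSemidef_conjTranspose_mul_self _

/-- SLE verification criterion: a tripartite density matrix ρ has stochastically
localizable entanglement on subsystems A and B (via a finite family of product Kraus
operators with `∑ K†K ≤ I`, keeping the normalized reduced state on AB entangled)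
iff there is a unit vector ψ on C whose projection leaves an entangled
normalized state on AB. -/
theorem sle_iff_exists_unit_vector {a b c : ℕ}
    (ρ : Matrix (Fin a × Fin b × Fin c) (Fin a × Fin b × Fin c) ℂ)
    (hρ : ρ.PosSemidef) (htr : ρ.trace = 1) :
    (∃ (n : ℕ) (KA : Fin n → Matrix (Fin a) (Fin a) ℂ)
       (KB : Fin n → Matrix (Fin b) (Fin b) ℂ) (KC : Fin n → Matrix (Fin c) (Fin c) ℂ),
       (1 - ∑ i, (KA i ⊗ₖ (KB i ⊗ₖ KC i))ᴴ * (KA i ⊗ₖ (KB i ⊗ₖ KC i))).PosSemidef ∧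
       0 < (∑ i, (KA i ⊗ₖ (KB i ⊗ₖ KC i)) * ρ * (KA i ⊗ₖ (KB i ⊗ₖ KC i))ᴴ).trace ∧
       ¬ Separable
         (((∑ i, (KA i ⊗ₖ (KB i ⊗ₖ KC i)) * ρ * (KA i ⊗ₖ (KB i ⊗ₖ KC i))ᴴ).trace)⁻¹ •
           ptraceC (∑ i, (KA i ⊗ₖ (KB i ⊗ₖ KC i)) * ρ * (KA i ⊗ₖ (KB i ⊗ₖ KC i))ᴴ)))
    ↔
    (∃ ψ : Fin c → ℂ, (∑ m, Complex.normSq (ψ m)) = 1 ∧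
       0 < (Matrix.of (fun p q : Fin a × Fin b =>
              ∑ m, ∑ n, (starRingEnd ℂ) (ψ m) * ρ (p.1, p.2, m) (q.1, q.2, n) * ψ n)).trace ∧
       ¬ Separable
         (((Matrix.of (fun p q : Fin a × Fin b =>
              ∑ m, ∑ n, (starRingEnd ℂ) (ψ m) * ρ (p.1, p.2, m) (q.1, q.2, n) * ψ n)).trace)⁻¹ •
           Matrix.of (fun p q : Fin a × Fin b =>
              ∑ m, ∑ n, (starRingEnd ℂ) (ψ m) * ρ (p.1, p.2, m) (q.1, q.2, n) * ψ n))) := by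
  constructor
  · rintro ⟨n, KA, KB, KC, hK, htrT, hent⟩
    by_contra hR
    push_neg at hR
    apply hent
    have hR' : ∀ ψ : Fin c → ℂ, (∑ m, Complex.normSq (ψ m)) = 1 →
        0 < (proj ρ ψ).trace → Separable (((proj ρ ψ).trace)⁻¹ • proj ρ ψ) := hR
    have hsep := sep_proj_of_not_rhs hρ hR'
    have hdec : ptraceC (∑ i, (KA i ⊗ₖ (KB i ⊗ₖ KC i)) * ρ * (KA i ⊗ₖ (KB i ⊗ₖ KC i))ᴴ)
        = ∑ i, ∑ m : Fin c, (KA i ⊗ₖ KB i) *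
            proj ρ (fun s => (starRingEnd ℂ) (KC i m s)) * (KA i ⊗ₖ KB i)ᴴ := by
      rw [ptraceC_sum]
      exact Finset.sum_congr rfl fun i _ => key_one _ _ _ _
    rw [hdec]
    exact sep_smul (complex_inv_nonneg htrT)
      (sep_sum _ _ fun i _ => sep_sum _ _ fun m _ => sep_conj _ _ (hsep _))
  · rintro ⟨ψ, hψ, htrσ, hent⟩
    have hc : 0 < c := by
      rcases Nat.eq_zero_or_pos c with rfl | h
      · simp at hψ
      · exact h
    have i0 : Fin c := ⟨0, hc⟩
    set KC : Matrix (Fin c) (Fin c) ℂ :=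
      Matrix.of (fun m s => (if m = i0 then 1 else 0) * (starRingEnd ℂ) (ψ s)) with hKC
    have hKCC : KCᴴ * KC = vecMulVec ψ (star ψ) := by
      ext s t
      simp only [Matrix.mul_apply, conjTranspose_apply, hKC, Matrix.of_apply,
        vecMulVec_apply, Pi.star_apply, _root_.map_mul, apply_ite (starRingEnd ℂ),
        _root_.map_one, _root_.map_zero, Complex.conj_conj, ite_mul, one_mul, zero_mul,
        mul_ite, mul_zero, mul_one, Finset.sum_ite_eq, Finset.sum_ite_eq',
        Finset.mem_univ, if_true]
      simp
    have hptr : ptraceC (∑ i : Fin 1, ((1 : Matrix (Fin a) (Fin a) ℂ) ⊗ₖ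
          ((1 : Matrix (Fin b) (Fin b) ℂ) ⊗ₖ KC)) * ρ *
          ((1 : Matrix (Fin a) (Fin a) ℂ) ⊗ₖ ((1 : Matrix (Fin b) (Fin b) ℂ) ⊗ₖ KC))ᴴ)
        = proj ρ ψ := by
      rw [Fin.sum_univ_one, key_one]
      have h1 : ∀ m : Fin c, (fun s => (starRingEnd ℂ) (KC m s))
          = (fun s => (if m = i0 then (1:ℂ) else 0) * ψ s) := by
        intro m; funext s
        simp [hKC, apply_ite (starRingEnd ℂ)]
      have h2 : ∀ m : Fin c,
          ((starRingEnd ℂ) (if m = i0 then (1:ℂ) else 0) * (if m = i0 then (1:ℂ) else 0))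
          = if m = i0 then (1:ℂ) else 0 := by
        intro m; split_ifs <;> simp
      simp_rw [h1, proj_smul, h2, Matrix.one_kronecker_one, Matrix.conjTranspose_one,
        Matrix.one_mul, Matrix.mul_one, ite_smul, one_smul, zero_smul]
      simp
    have htrT : (∑ i : Fin 1, ((1 : Matrix (Fin a) (Fin a) ℂ) ⊗ₖ
          ((1 : Matrix (Fin b) (Fin b) ℂ) ⊗ₖ KC)) * ρ *
          ((1 : Matrix (Fin a) (Fin a) ℂ) ⊗ₖ ((1 : Matrix (Fin b) (Fin b) ℂ) ⊗ₖ KC))ᴴ).trace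
        = (proj ρ ψ).trace := by
      rw [← trace_ptraceC, hptr]
    refine ⟨1, fun _ => 1, fun _ => 1, fun _ => KC, ?_, ?_, ?_⟩
    · simp only [Fin.sum_univ_one]
      rw [kron_conjTranspose, kron_conjTranspose, conjTranspose_one,
        ← mul_kronecker_mul, ← mul_kronecker_mul, Matrix.one_mul, hKCC, one_sub_kron]
      simp only [conjTranspose_one, Matrix.one_mul]
      rw [one_sub_kron]
      exact one_kron_psd (one_kron_psd (one_sub_outer_psd hψ))
    · rw [htrT]; exact htrσ
    · rw [htrT, hptr]; exact hent
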